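/- Let (μ_n)_{n∈ℕ} and ν be Borel probability measures on ℝ^d such that d_convex(μ_n, ν) → 0 as n → ∞. Then μ_n converges weakly (in law) to ν. -/

import Mathlib

open MeasureTheory Filter
open scoped Topology ENNReal BigOperators

noncomputable section

/-- The convex distance between two measures on `ℝ^d`:
the supremum over all Borel convex subsets `C` of `|μ(C) − ν(C)|`. -/
def convexDist {d : ℕ} (μ ν : Measure (EuclideanSpace ℝ (Fin d))) : ℝ :=
  ⨆ C : {C : Set (EuclideanSpace ℝ (Fin d)) // Convex ℝ C ∧ MeasurableSet C},
    |(μ C.1).toReal - (ν C.1).toReal|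

/-- If `d_convex(μ_n, ν) → 0` for Borel probability measures on `ℝ^d`,
then `μ_n` converges weakly (in law) to `ν`. -/
theorem convexDist_tendsto_zero_weak_convergence
    (d : ℕ) (μ : ℕ → Measure (EuclideanSpace ℝ (Fin d))) (ν : Measure (EuclideanSpace ℝ (Fin d)))
    (hμ : ∀ n, IsProbabilityMeasure (μ n)) (hν : IsProbabilityMeasure ν)
    (h : Tendsto (fun n => convexDist (μ n) ν) atTop (𝓝 0)) :
    ∀ f : BoundedContinuousFunction (EuclideanSpace ℝ (Fin d)) ℝ,
      Tendsto (fun n => ∫ x, f x ∂(μ n)) atTop (𝓝 (∫ x, f x ∂ν)) := by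
  set E := EuclideanSpace ℝ (Fin d)
  -- Step A: convergence on convex measurable sets
  have key : ∀ C : Set E, Convex ℝ C → MeasurableSet C →
      Tendsto (fun n => ((μ n) C).toReal) atTop (𝓝 ((ν C).toReal)) := by
    intro C hC hCm
    rw [← tendsto_sub_nhds_zero_iff]
    refine squeeze_zero_norm (a := fun n => convexDist (μ n) ν) (fun n => ?_) h
    rw [Real.norm_eq_abs]
    have hbdd : BddAbove (Set.range fun C' : {C : Set E // Convex ℝ C ∧ MeasurableSet C} =>
        |((μ n) C'.1).toReal - (ν C'.1).toReal|) := by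
      refine ⟨1, ?_⟩
      rintro x ⟨C', rfl⟩
      have h1 : ((μ n) C'.1).toReal ≤ 1 := by
        have := ENNReal.toReal_mono (measure_ne_top (μ n) Set.univ)
          (measure_mono (Set.subset_univ C'.1))
        simpa [measure_univ] using this
      have h2 : ((ν) C'.1).toReal ≤ 1 := by
        have := ENNReal.toReal_mono (measure_ne_top ν Set.univ)
          (measure_mono (Set.subset_univ C'.1))
        simpa [measure_univ] using this
      have h3 : (0:ℝ) ≤ ((μ n) C'.1).toReal := ENNReal.toReal_nonneg
      have h4 : (0:ℝ) ≤ ((ν) C'.1).toReal := ENNReal.toReal_nonneg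
      rw [abs_le]; constructor <;> linarith
    exact le_ciSup hbdd (⟨C, hC, hCm⟩ : {C : Set E // Convex ℝ C ∧ MeasurableSet C})
  -- ENNReal version
  have keyE : ∀ C : Set E, Convex ℝ C → MeasurableSet C →
      Tendsto (fun n => (μ n) C) atTop (𝓝 (ν C)) := by
    intro C hC hCm
    exact (ENNReal.tendsto_toReal_iff (fun n => measure_ne_top _ _)
      (measure_ne_top _ _)).mp (key C hC hCm)
  -- Step B: convergence on finite unions of convex measurable sets
  have keyU : ∀ (s : Finset ℕ) (g : ℕ → Set E),
      (∀ i ∈ s, Convex ℝ (g i) ∧ MeasurableSet (g i)) →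
      Tendsto (fun n => ((μ n) (⋃ i ∈ s, g i)).toReal) atTop
        (𝓝 ((ν (⋃ i ∈ s, g i)).toReal)) := by
    intro s
    induction s using Finset.induction_on with
    | empty =>
        intro g _
        simp
    | @insert a s ha ih =>
        intro g hg
        have hgA := hg a (Finset.mem_insert_self a s)
        have hgs : ∀ i ∈ s, Convex ℝ (g i) ∧ MeasurableSet (g i) :=
          fun i hi => hg i (Finset.mem_insert_of_mem hi)
        set A := g a
        set B := ⋃ i ∈ s, g i with hB
        have hBm : MeasurableSet B :=
          MeasurableSet.biUnion (Finset.countable_toSet s) (fun i hi => (hgs i hi).2)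
        have hAB : A ∩ B = ⋃ i ∈ s, (A ∩ g i) := by
          rw [hB, Set.inter_iUnion₂]
        have formula : ∀ (m : Measure E), IsProbabilityMeasure m →
            (m (A ∪ B)).toReal = (m A).toReal + (m B).toReal - (m (A ∩ B)).toReal := by
          intro m hm
          have h1 := measure_union_add_inter (μ := m) A hBm
          have h2 : (m (A ∪ B) + m (A ∩ B)).toReal = (m A + m B).toReal := by rw [h1]
          rw [ENNReal.toReal_add (measure_ne_top _ _) (measure_ne_top _ _),
            ENNReal.toReal_add (measure_ne_top _ _) (measure_ne_top _ _)] at h2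
          linarith
        have tA : Tendsto (fun n => ((μ n) A).toReal) atTop (𝓝 ((ν A).toReal)) :=
          key A hgA.1 hgA.2
        have tB : Tendsto (fun n => ((μ n) B).toReal) atTop (𝓝 ((ν B).toReal)) := ih g hgs
        have tAB : Tendsto (fun n => ((μ n) (A ∩ B)).toReal) atTop (𝓝 ((ν (A ∩ B)).toReal)) := by
          rw [hAB]
          exact ih (fun i => A ∩ g i)
            (fun i hi => ⟨hgA.1.inter (hgs i hi).1, hgA.2.inter (hgs i hi).2⟩)
        have : Tendsto (fun n => ((μ n) A).toReal + ((μ n) B).toReal - ((μ n) (A ∩ B)).toReal)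
            atTop (𝓝 ((ν A).toReal + (ν B).toReal - (ν (A ∩ B)).toReal)) :=
          (tA.add tB).sub tAB
        rw [Finset.set_biUnion_insert]
        refine Tendsto.congr (fun n => (formula (μ n) (hμ n)).symm) ?_
        rw [formula ν hν]
        exact this
  -- Step C: liminf condition for open sets (in ℝ≥0∞)
  have h_opens : ∀ G : Set E, IsOpen G → ν G ≤ atTop.liminf (fun n => (μ n) G) := by
    intro G hG
    obtain ⟨r, hr⟩ : ∃ r : G → ℝ, ∀ x : G, 0 < r x ∧ Metric.ball (x : E) (r x) ⊆ G := by
      have : ∀ x : G, ∃ ε : ℝ, 0 < ε ∧ Metric.ball (x : E) ε ⊆ G := by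
        intro x
        obtain ⟨ε, hε, hsub⟩ := Metric.isOpen_iff.mp hG x x.2
        exact ⟨ε, hε, hsub⟩
      choose r hr using this
      exact ⟨r, hr⟩
    have hcover : (⋃ x : G, Metric.ball (x : E) (r x)) = G := by
      apply subset_antisymm
      · exact Set.iUnion_subset fun x => (hr x).2
      · intro y hy
        exact Set.mem_iUnion.mpr ⟨⟨y, hy⟩, Metric.mem_ball_self (hr ⟨y, hy⟩).1⟩
    obtain ⟨T, hTc, hTU⟩ := TopologicalSpace.isOpen_iUnion_countable
      (fun x : G => Metric.ball (x : E) (r x)) (fun _ => Metric.isOpen_ball)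
    rcases T.eq_empty_or_nonempty with hT | hT
    · have : G = ∅ := by
        rw [← hcover, ← hTU, hT]
        simp
      simp [this]
    obtain ⟨e, he⟩ := hTc.exists_eq_range hT
    set B : ℕ → Set E := fun k => Metric.ball ((e k : G) : E) (r (e k)) with hBdef
    have hGB : (⋃ k, B k) = G := by
      rw [← hcover, ← hTU, he]
      rw [Set.biUnion_range]
    have hconv : ∀ k, Convex ℝ (B k) ∧ MeasurableSet (B k) :=
      fun k => ⟨convex_ball _ _, Metric.isOpen_ball.measurableSet⟩
    -- partial unions
    set U : ℕ → Set E := fun m => ⋃ i ∈ Finset.range (m + 1), B i with hUdef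
    have hUacc : ∀ m, Set.accumulate B m = U m := by
      intro m
      ext x
      simp [Set.mem_accumulate, hUdef, Nat.lt_succ_iff]
    have hUG : ∀ m, U m ⊆ G := by
      intro m
      rw [← hGB]
      exact fun x hx => by
        rcases Set.mem_iUnion₂.mp hx with ⟨i, _, hxi⟩
        exact Set.mem_iUnion.mpr ⟨i, hxi⟩
    have hνU : Tendsto (fun m => ν (U m)) atTop (𝓝 (ν G)) := by
      have := tendsto_measure_iUnion_accumulate (μ := ν) (f := B)
      rw [hGB] at this
      exact this.congr (fun m => by rw [hUacc])
    refine le_of_tendsto hνU (Filter.Eventually.of_forall fun m => ?_)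
    -- ν (U m) ≤ liminf μ_n G
    have hμU : Tendsto (fun n => (μ n) (U m)) atTop (𝓝 (ν (U m))) := by
      have := keyU (Finset.range (m + 1)) B (fun i _ => hconv i)
      exact (ENNReal.tendsto_toReal_iff (fun n => measure_ne_top _ _)
        (measure_ne_top _ _)).mp this
    calc ν (U m) = atTop.liminf (fun n => (μ n) (U m)) := hμU.liminf_eq.symm
      _ ≤ atTop.liminf (fun n => (μ n) G) :=
          liminf_le_liminf (Filter.Eventually.of_forall fun n => measure_mono (hUG m))
  -- Conclude via the portmanteau theorem
  set P : ℕ → ProbabilityMeasure E := fun n => ⟨μ n, hμ n⟩ with hP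
  set Q : ProbabilityMeasure E := ⟨ν, hν⟩ with hQ
  have h_opens' : ∀ G, IsOpen G → Q G ≤ atTop.liminf (fun n => P n G) := by
    intro G hG
    have aux : (ENNReal.ofNNReal (atTop.liminf (fun n => P n G))) =
        atTop.liminf (ENNReal.ofNNReal ∘ fun n => P n G) := by
      refine Monotone.map_liminf_of_continuousAt (F := atTop) ENNReal.coe_mono (fun n => P n G)
        ENNReal.continuous_coe.continuousAt ?_ ?_
      · exact Filter.IsBoundedUnder.isCoboundedUnder_ge ⟨1, by simp⟩
      · exact ⟨0, by simp⟩
    rw [← ENNReal.coe_le_coe, aux]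
    simp only [Function.comp_def, ProbabilityMeasure.ennreal_coeFn_eq_coeFn_toMeasure]
    exact h_opens G hG
  have htend : Tendsto P atTop (𝓝 Q) := tendsto_of_forall_isOpen_le_liminf h_opens'
  intro f
  exact ProbabilityMeasure.tendsto_iff_forall_integral_tendsto.mp htend f
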